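/- Let d ∈ ℕ and let 𝒲 = (w^λ)_{λ>0} be a weight function system on ℝ^d satisfying (wM) and (N). Then for every λ > 0 there exists μ > 0 such that the function x ↦ w^λ(x)/w^μ(x) is Lebesgue integrable on ℝ^d and tends to 0 as |x| → ∞. -/

import Mathlib

open MeasureTheory Filter ENNReal Asymptotics

noncomputable section

/-- Partial derivative in the `i`-th coordinate direction. -/
def pd (d : ℕ) (i : Fin d) (f : EuclideanSpace ℝ (Fin d) → ℂ) :
    EuclideanSpace ℝ (Fin d) → ℂ :=
  fun x => fderiv ℝ f x (EuclideanSpace.single i 1)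

/-- Iterated partial derivative in the `i`-th coordinate direction. -/
def pdPow (d : ℕ) (i : Fin d) :
    ℕ → (EuclideanSpace ℝ (Fin d) → ℂ) → EuclideanSpace ℝ (Fin d) → ℂ
  | 0, f => f
  | n + 1, f => pd d i (pdPow d i n f)

/-- Mixed partial derivative `∂^α` for a multi-index `α : Fin d → ℕ`. -/
def pdMulti (d : ℕ) (α : Fin d → ℕ) (f : EuclideanSpace ℝ (Fin d) → ℂ) :
    EuclideanSpace ℝ (Fin d) → ℂ :=
  (List.finRange d).foldr (fun i g => pdPow d i (α i) g) f

/-- The Gelfand–Shilov seminorm `‖φ‖_{𝒮^M_{w,q}}`, as an `ℝ≥0∞`-valued quantity: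
`sup_α ‖(∂^α φ)·w‖_{L^q} / M_α`. -/
def gsNorm (d : ℕ) (M : (Fin d → ℕ) → ℝ) (w : EuclideanSpace ℝ (Fin d) → ℝ)
    (q : ℝ≥0∞) (φ : EuclideanSpace ℝ (Fin d) → ℂ) : ℝ≥0∞ :=
  ⨆ α : Fin d → ℕ,
    eLpNorm (fun x => ‖pdMulti d α φ x‖ * w x) q volume / ENNReal.ofReal (M α)

/-- The lattice point of `ℤ^d` inside `ℝ^d`. -/
def intPt (d : ℕ) (j : Fin d → ℤ) : EuclideanSpace ℝ (Fin d) :=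
  (WithLp.equiv 2 (Fin d → ℝ)).symm fun i => (j i : ℝ)

/-- The associated function `ω_M(x) = sup_α log (|x^α| M_0 / M_α)` of a (multi-indexed)
sequence `M`. -/
def assocFun (d : ℕ) (M : (Fin d → ℕ) → ℝ) (x : EuclideanSpace ℝ (Fin d)) : ℝ :=
  ⨆ α : Fin d → ℕ, Real.log ((∏ i, |x i| ^ α i) * M 0 / M α)

/-- `w` is a weight function system on `ℝ^d`: each `w λ` (for `λ > 0`) is continuous, `≥ 1`,
and `w λ ≤ w μ` pointwise whenever `μ ≤ λ`. -/
structure IsWFS (d : ℕ) (w : ℝ → EuclideanSpace ℝ (Fin d) → ℝ) : Prop where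
  cont : ∀ l, 0 < l → Continuous (w l)
  one_le : ∀ l, 0 < l → ∀ x, 1 ≤ w l x
  mono : ∀ m l, 0 < m → m ≤ l → ∀ x, w l x ≤ w m x

/-- Condition (wM) (Beurling) for a weight function system. -/
def WFS_wM_B (d : ℕ) (w : ℝ → EuclideanSpace ℝ (Fin d) → ℝ) : Prop :=
  ∀ l, 0 < l → ∃ m, 0 < m ∧ ∃ C, 0 < C ∧
    ∀ x y : EuclideanSpace ℝ (Fin d), ‖y‖ ≤ 1 → w l (x + y) ≤ C * w m x

/-- Condition {wM} (Roumieu) for a weight function system. -/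
def WFS_wM_R (d : ℕ) (w : ℝ → EuclideanSpace ℝ (Fin d) → ℝ) : Prop :=
  ∀ m, 0 < m → ∃ l, 0 < l ∧ ∃ C, 0 < C ∧
    ∀ x y : EuclideanSpace ℝ (Fin d), ‖y‖ ≤ 1 → w l (x + y) ≤ C * w m x

/-- Condition (M) (Beurling) for a weight function system. -/
def WFS_M_B (d : ℕ) (w : ℝ → EuclideanSpace ℝ (Fin d) → ℝ) : Prop :=
  ∀ l, 0 < l → ∃ m, 0 < m ∧ ∃ n, 0 < n ∧ ∃ C, 0 < C ∧
    ∀ x y : EuclideanSpace ℝ (Fin d), w l (x + y) ≤ C * w m x * w n y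

/-- Condition (N) (Beurling) for a weight function system. -/
def WFS_N_B (d : ℕ) (w : ℝ → EuclideanSpace ℝ (Fin d) → ℝ) : Prop :=
  ∀ l, 0 < l → ∃ m, 0 < m ∧ Integrable (fun x => w l x / w m x) volume

/-- Condition {N} (Roumieu) for a weight function system. -/
def WFS_N_R (d : ℕ) (w : ℝ → EuclideanSpace ℝ (Fin d) → ℝ) : Prop :=
  ∀ m, 0 < m → ∃ l, 0 < l ∧ Integrable (fun x => w l x / w m x) volume

/-- `M` is a weight sequence system on `ℝ^d`: each `M λ` (for `λ > 0`) is a positive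
sequence with `(M^λ_α)^{1/|α|} → ∞` satisfying the log-convexity condition (M.1), and
`M^λ_α ≤ M^μ_α` whenever `λ ≤ μ`. -/
structure IsWSS (d : ℕ) (M : ℝ → (Fin d → ℕ) → ℝ) : Prop where
  pos : ∀ l, 0 < l → ∀ α, 0 < M l α
  growth : ∀ l, 0 < l → ∀ R : ℝ, 0 < R → ∃ N : ℕ, ∀ α : Fin d → ℕ,
    N ≤ ∑ i, α i → R ^ (∑ i, α i) ≤ M l α
  logconvex : ∀ l, 0 < l → ∀ (α : Fin d → ℕ) (j : Fin d),
    M l (α + Pi.single j 1) ^ 2 ≤ M l α * M l (α + Pi.single j 2)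
  mono : ∀ l m, 0 < l → l ≤ m → ∀ α, M l α ≤ M m α

/-- Condition (L) (Beurling) for a weight sequence system. -/
def WSS_L_B (d : ℕ) (M : ℝ → (Fin d → ℕ) → ℝ) : Prop :=
  ∀ R : ℝ, 0 < R → ∀ l, 0 < l → ∃ m, 0 < m ∧ ∃ C, 0 < C ∧
    ∀ α : Fin d → ℕ, R ^ (∑ i, α i) * M m α ≤ C * M l α

/-- Condition {L} (Roumieu) for a weight sequence system. -/
def WSS_L_R (d : ℕ) (M : ℝ → (Fin d → ℕ) → ℝ) : Prop :=
  ∀ R : ℝ, 0 < R → ∀ m, 0 < m → ∃ l, 0 < l ∧ ∃ C, 0 < C ∧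
    ∀ α : Fin d → ℕ, R ^ (∑ i, α i) * M m α ≤ C * M l α

/-- Condition (𝔐.2)' (Beurling) for a weight sequence system. -/
def WSS_M2_B (d : ℕ) (M : ℝ → (Fin d → ℕ) → ℝ) : Prop :=
  ∀ l, 0 < l → ∃ m, 0 < m ∧ ∃ C, 0 < C ∧ ∃ H, 0 < H ∧
    ∀ (α : Fin d → ℕ) (j : Fin d),
      M m (α + Pi.single j 1) ≤ C * H ^ (∑ i, α i) * M l α

/-- Condition {𝔐.2}' (Roumieu) for a weight sequence system. -/
def WSS_M2_R (d : ℕ) (M : ℝ → (Fin d → ℕ) → ℝ) : Prop :=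
  ∀ m, 0 < m → ∃ l, 0 < l ∧ ∃ C, 0 < C ∧ ∃ H, 0 < H ∧
    ∀ (α : Fin d → ℕ) (j : Fin d),
      M l (α + Pi.single j 1) ≤ C * H ^ (∑ i, α i) * M m α

/-- A weight sequence system is accelerating if `M^λ_{α+e_j}/M^λ_α ≤ M^μ_{α+e_j}/M^μ_α`
for `λ ≤ μ`. -/
def WSSAccel (d : ℕ) (M : ℝ → (Fin d → ℕ) → ℝ) : Prop :=
  ∀ l m, 0 < l → l ≤ m → ∀ (α : Fin d → ℕ) (j : Fin d),
    M l (α + Pi.single j 1) / M l α ≤ M m (α + Pi.single j 1) / M m α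

/-- A weight sequence system is isotropically decomposable: there is a partition of the `d`
coordinates into `k` blocks (equivalently, after a permutation of the coordinates, a
decomposition `ℕ^d = ℕ^{d_1} × ⋯ × ℕ^{d_k}`) and positive functions `m^λ_j : ℕ → (0,∞)` with
`M^λ_α = ∏_j m^λ_j (|α^{(j)}|)`. -/
def IsoDecomposable (d : ℕ) (M : ℝ → (Fin d → ℕ) → ℝ) : Prop :=
  ∃ (k : ℕ) (b : Fin d → Fin k) (m : ℝ → Fin k → ℕ → ℝ),
    (∀ l, 0 < l → ∀ j n, 0 < m l j n) ∧
    ∀ l, 0 < l → ∀ α : Fin d → ℕ,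
      M l α = ∏ j, m l j (∑ i ∈ Finset.univ.filter fun i => b i = j, α i)

/-- Membership in the Beurling Gelfand–Shilov class `𝒮^{(𝔐)}_{(𝒲),q}`. -/
def gsBeurling (d : ℕ) (M : ℝ → (Fin d → ℕ) → ℝ) (w : ℝ → EuclideanSpace ℝ (Fin d) → ℝ)
    (q : ℝ≥0∞) (φ : EuclideanSpace ℝ (Fin d) → ℂ) : Prop :=
  ContDiff ℝ (⊤ : ℕ∞) φ ∧ ∀ l, 0 < l → gsNorm d (M l) (w l) q φ < ⊤

/-- Membership in the Roumieu Gelfand–Shilov class `𝒮^{{𝔐}}_{{𝒲},q}`. -/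
def gsRoumieu (d : ℕ) (M : ℝ → (Fin d → ℕ) → ℝ) (w : ℝ → EuclideanSpace ℝ (Fin d) → ℝ)
    (q : ℝ≥0∞) (φ : EuclideanSpace ℝ (Fin d) → ℂ) : Prop :=
  ContDiff ℝ (⊤ : ℕ∞) φ ∧ ∃ l, 0 < l ∧ gsNorm d (M l) (w l) q φ < ⊤

/-- Membership in the auxiliary space `𝒮̃^{(𝔐)}_{(𝒲)}`. -/
def gsTilde (d : ℕ) (M : ℝ → (Fin d → ℕ) → ℝ) (w : ℝ → EuclideanSpace ℝ (Fin d) → ℝ)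
    (ψ : EuclideanSpace ℝ (Fin d) → ℂ) : Prop :=
  ContDiff ℝ (⊤ : ℕ∞) ψ ∧ ∀ l, 0 < l → ∀ k : ℕ, ∃ C : ℝ,
    ∀ (α : Fin d → ℕ) (x : EuclideanSpace ℝ (Fin d)),
      ‖pdMulti d α ψ x‖ * (1 + ‖x‖) ^ k * w l x / M l α ≤ C

end

/-- If a weight function system `𝒲` on `ℝ^d` satisfies (wM) and (N), then for every `λ > 0`
there is `μ > 0` such that `w^λ/w^μ` is integrable and tends to `0` at infinity. -/
theorem stmt0 (d : ℕ) (w : ℝ → EuclideanSpace ℝ (Fin d) → ℝ)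
    (hW : IsWFS d w) (hwM : WFS_wM_B d w) (hN : WFS_N_B d w) :
    ∀ l, 0 < l → ∃ m, 0 < m ∧
      Integrable (fun x => w l x / w m x) volume ∧
      Tendsto (fun x => w l x / w m x) (cocompact (EuclideanSpace ℝ (Fin d))) (nhds 0) := by
  intro l hl
  obtain ⟨m1, hm1, C1, hC1, h1⟩ := hwM l hl
  obtain ⟨m2, hm2, hg⟩ := hN m1 hm1
  obtain ⟨m3, hm3, C3, hC3, h3⟩ := hwM m2 hm2
  set g : EuclideanSpace ℝ (Fin d) → ℝ := fun x => w m1 x / w m2 x with hgdef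
  set f : EuclideanSpace ℝ (Fin d) → ℝ := fun x => w l x / w m3 x with hfdef
  have pos : ∀ k : ℝ, 0 < k → ∀ x : EuclideanSpace ℝ (Fin d), (0:ℝ) < w k x := fun k hk x =>
    lt_of_lt_of_le one_pos (hW.one_le k hk x)
  have gnonneg : ∀ x : EuclideanSpace ℝ (Fin d), 0 ≤ g x := fun x =>
    div_nonneg (pos m1 hm1 x).le (pos m2 hm2 x).le
  have fnonneg : ∀ x : EuclideanSpace ℝ (Fin d), 0 ≤ f x := fun x =>
    div_nonneg (pos l hl x).le (pos m3 hm3 x).le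
  -- the key pointwise bound
  have key : ∀ x z : EuclideanSpace ℝ (Fin d), dist z x ≤ 1 → f x ≤ (C1 * C3) * g z := by
    intro x z hz
    have hzx : ‖x - z‖ ≤ 1 := by rw [dist_comm, dist_eq_norm] at hz; exact hz
    have hzx' : ‖z - x‖ ≤ 1 := by rw [← neg_sub, norm_neg]; exact hzx
    have e1 : z + (x - z) = x := by abel
    have e2 : x + (z - x) = z := by abel
    have h1' : w l x ≤ C1 * w m1 z := by
      have := h1 z (x - z) hzx; rwa [e1] at this
    have h3' : w m2 z ≤ C3 * w m3 x := by
      have := h3 x (z - x) hzx'; rwa [e2] at this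
    have hw3 := pos m3 hm3 x
    have hw2 := pos m2 hm2 z
    have hw1 := pos m1 hm1 z
    rw [hfdef, hgdef]
    simp only
    rw [show (C1 * C3) * (w m1 z / w m2 z) = (C1 * C3 * w m1 z) / w m2 z by ring,
      div_le_div_iff₀ hw3 hw2]
    calc w l x * w m2 z ≤ (C1 * w m1 z) * (C3 * w m3 x) :=
          mul_le_mul h1' h3' hw2.le (by positivity)
      _ = C1 * C3 * w m1 z * w m3 x := by ring
  have fcont : Continuous f :=
    (hW.cont l hl).div (hW.cont m3 hm3) fun x => (pos m3 hm3 x).ne'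
  have hfint : Integrable f volume := by
    refine (hg.const_mul (C1 * C3)).mono' fcont.aestronglyMeasurable (ae_of_all _ fun x => ?_)
    rw [Real.norm_of_nonneg (fnonneg x)]
    exact key x x (by simp)
  refine ⟨m3, hm3, hfint, ?_⟩
  -- volume of the unit ball
  set V : ℝ := (volume (Metric.ball (0 : EuclideanSpace ℝ (Fin d)) 1)).toReal with hV
  have hVpos : 0 < V :=
    ENNReal.toReal_pos (Metric.measure_ball_pos volume 0 one_pos).ne' measure_ball_lt_top.ne
  set K : ℝ := C1 * C3 with hK
  have hKpos : 0 < K := mul_pos hC1 hC3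
  -- f x is bounded by the average of K * g over the unit ball around x
  have bound : ∀ x : EuclideanSpace ℝ (Fin d),
      f x ≤ K * (∫ z in Metric.ball x 1, g z) / V := by
    intro x
    have hball : volume (Metric.ball x 1)
        = volume (Metric.ball (0 : EuclideanSpace ℝ (Fin d)) 1) :=
      Measure.addHaar_ball_center volume x 1
    have h₁ : ∫ _z in Metric.ball x 1, f x ≤ ∫ z in Metric.ball x 1, K * g z := by
      refine setIntegral_mono_on
        (integrableOn_const measure_ball_lt_top.ne)
        ((hg.const_mul K).integrableOn) measurableSet_ball fun z hz => ?_
      exact key x z (le_of_lt (Metric.mem_ball.1 hz))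
    rw [setIntegral_const, measureReal_def, hball, smul_eq_mul,
      MeasureTheory.integral_const_mul K g] at h₁
    rw [le_div_iff₀ hVpos]
    calc f x * V = V * f x := by ring
      _ ≤ K * ∫ z in Metric.ball x 1, g z := h₁
  -- the tail of the integral of g is small
  have htail : ∀ δ : ℝ, 0 < δ →
      ∃ n : ℕ, ∫ z in (Metric.ball (0 : EuclideanSpace ℝ (Fin d)) n)ᶜ, g z < δ := by
    intro δ hδ
    have hmono : Monotone fun n : ℕ => Metric.ball (0 : EuclideanSpace ℝ (Fin d)) n :=
      fun a b hab => Metric.ball_subset_ball (by exact_mod_cast hab)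
    have hun : ⋃ n : ℕ, Metric.ball (0 : EuclideanSpace ℝ (Fin d)) n = Set.univ :=
      Metric.iUnion_ball_nat 0
    have ht := tendsto_setIntegral_of_monotone (μ := volume) (f := g)
      (s := fun n : ℕ => Metric.ball (0 : EuclideanSpace ℝ (Fin d)) n)
      (fun n => measurableSet_ball) hmono (by rw [hun]; exact hg.integrableOn)
    rw [hun, setIntegral_univ] at ht
    have hev := ht.eventually (eventually_gt_nhds
      (show (∫ z, g z) - δ < ∫ z, g z by linarith))
    obtain ⟨n, hn⟩ := hev.exists
    refine ⟨n, ?_⟩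
    have hsplit : (∫ z in Metric.ball (0 : EuclideanSpace ℝ (Fin d)) n, g z)
        + ∫ z in (Metric.ball (0 : EuclideanSpace ℝ (Fin d)) n)ᶜ, g z = ∫ z, g z :=
      integral_add_compl measurableSet_ball hg
    simp only at hn
    linarith
  rw [NormedAddCommGroup.tendsto_nhds_zero]
  intro ε hε
  obtain ⟨n, hn⟩ := htail (ε * V / K) (by positivity)
  have hnorm : ∀ᶠ x : EuclideanSpace ℝ (Fin d) in cocompact (EuclideanSpace ℝ (Fin d)),
      (n : ℝ) + 1 ≤ ‖x‖ :=
    tendsto_norm_cocompact_atTop.eventually_ge_atTop _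
  filter_upwards [hnorm] with x hx
  have hsub : Metric.ball x 1 ⊆ (Metric.ball (0 : EuclideanSpace ℝ (Fin d)) n)ᶜ := by
    intro z hz
    simp only [Set.mem_compl_iff, Metric.mem_ball, not_lt, dist_zero_right]
    have h₂ : dist z x < 1 := Metric.mem_ball.1 hz
    have h₃ : ‖x‖ - ‖x - z‖ ≤ ‖z‖ := by
      have := norm_sub_norm_le x (x - z)
      simpa using this.trans_eq (by congr 1; abel)
    have h₄ : ‖x - z‖ < 1 := by rw [dist_comm, dist_eq_norm] at h₂; exact h₂
    linarith
  have hI : (∫ z in Metric.ball x 1, g z)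
      ≤ ∫ z in (Metric.ball (0 : EuclideanSpace ℝ (Fin d)) n)ᶜ, g z :=
    setIntegral_mono_set hg.integrableOn (ae_of_all _ gnonneg)
      (HasSubset.Subset.eventuallyLE hsub)
  have hfx : f x < ε := by
    calc f x ≤ K * (∫ z in Metric.ball x 1, g z) / V := bound x
      _ < K * (ε * V / K) / V := by
          have hlt : (∫ z in Metric.ball x 1, g z) < ε * V / K := lt_of_le_of_lt hI hn
          gcongr
      _ = ε := by field_simp
  rw [Real.norm_of_nonneg (fnonneg x)]
  exact hfx
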